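/- Dirichlet's principle: in a finite connected network G with distinct vertices a,z, the effective resistance R_eff(a↔z;G) equals the supremum of 1/E(h) over all functions h:V→ℝ with h(a)=0 and h(z)=1, where E(h) = (1/2)∑_{e⃗} c(e)(h(e⁺)−h(e⁻))². -/

import Mathlib

open Finset

section
variable {V : Type*} [Fintype V] (c : V → V → ℝ)

lemma myswap (hsym : ∀ x y, c x y = c y x) (F : V → V → ℝ) :
    ∑ x, ∑ y, c x y * F x y = ∑ x, ∑ y, c x y * F y x := by
  rw [Finset.sum_comm]
  exact Finset.sum_congr rfl fun x _ => Finset.sum_congr rfl fun y _ => by rw [hsym]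

lemma myparts (hsym : ∀ x y, c x y = c y x) (f g : V → ℝ) :
    ∑ x, ∑ y, c x y * ((f y - f x) * (g y - g x)) =
      -2 * ∑ x, g x * ∑ y, c x y * (f y - f x) := by
  have h1 : ∑ x, ∑ y, c x y * ((f y - f x) * g y) =
      - ∑ x, ∑ y, c x y * ((f y - f x) * g x) := by
    rw [myswap c hsym (fun x y => (f y - f x) * g y), ← Finset.sum_neg_distrib]
    exact Finset.sum_congr rfl fun x _ => by
      rw [← Finset.sum_neg_distrib]
      exact Finset.sum_congr rfl fun y _ => by ring
  calc ∑ x, ∑ y, c x y * ((f y - f x) * (g y - g x))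
      = ∑ x, (∑ y, c x y * ((f y - f x) * g y) - ∑ y, c x y * ((f y - f x) * g x)) := by
        exact Finset.sum_congr rfl fun x _ => by
          rw [← Finset.sum_sub_distrib]
          exact Finset.sum_congr rfl fun y _ => by ring
    _ = ∑ x, ∑ y, c x y * ((f y - f x) * g y) - ∑ x, ∑ y, c x y * ((f y - f x) * g x) := by
        rw [Finset.sum_sub_distrib]
    _ = -2 * ∑ x, ∑ y, c x y * ((f y - f x) * g x) := by rw [h1]; ring
    _ = -2 * ∑ x, g x * ∑ y, c x y * (f y - f x) := by
        congr 1
        exact Finset.sum_congr rfl fun x _ => by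
          rw [Finset.mul_sum]
          exact Finset.sum_congr rfl fun y _ => by ring

lemma myexpand (f g : V → ℝ) :
    ∑ x, ∑ y, c x y * ((f y + g y) - (f x + g x)) ^ 2 =
      ∑ x, ∑ y, c x y * (f y - f x) ^ 2
      + 2 * ∑ x, ∑ y, c x y * ((f y - f x) * (g y - g x))
      + ∑ x, ∑ y, c x y * (g y - g x) ^ 2 := by
  have : ∀ x : V, ∑ y, c x y * ((f y + g y) - (f x + g x)) ^ 2 =
      ∑ y, (c x y * (f y - f x) ^ 2 + 2 * (c x y * ((f y - f x) * (g y - g x)))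
        + c x y * (g y - g x) ^ 2) :=
    fun x => Finset.sum_congr rfl fun y _ => by ring
  simp only [this, Finset.sum_add_distrib, ← Finset.mul_sum]

lemma mypos (hnn : ∀ x y, 0 ≤ c x y)
    (hconn : ∀ x y : V, Relation.ReflTransGen (fun u v => 0 < c u v) x y)
    (h : V → ℝ) {u v : V} (huv : h u ≠ h v) :
    0 < ∑ x, ∑ y, c x y * (h y - h x) ^ 2 := by
  have hnnterm : ∀ x y : V, 0 ≤ c x y * (h y - h x) ^ 2 :=
    fun x y => mul_nonneg (hnn x y) (sq_nonneg _)
  have hnnsum : ∀ x : V, (0:ℝ) ≤ ∑ y, c x y * (h y - h x) ^ 2 :=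
    fun x => Finset.sum_nonneg fun y _ => hnnterm x y
  rcases (Finset.sum_nonneg fun x _ => hnnsum x).lt_or_eq with hlt | heq
  · exact hlt
  · exfalso
    have hz : ∀ x y : V, c x y * (h y - h x) ^ 2 = 0 := by
      intro x y
      have h1 := (Finset.sum_eq_zero_iff_of_nonneg (fun x _ => hnnsum x)).mp heq.symm x (mem_univ x)
      exact (Finset.sum_eq_zero_iff_of_nonneg (fun y _ => hnnterm x y)).mp h1 y (mem_univ y)
    have key : ∀ x y : V, 0 < c x y → h x = h y := by
      intro x y hc
      rcases mul_eq_zero.mp (hz x y) with h' | h'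
      · exact absurd h' hc.ne'
      · have := pow_eq_zero_iff (n := 2) (by norm_num) |>.mp h'
        linarith [sub_eq_zero.mp this]
    have conneq : ∀ p q : V, Relation.ReflTransGen (fun u v => 0 < c u v) p q → h p = h q := by
      intro p q hpq
      induction hpq with
      | refl => rfl
      | tail _ hedge ih => exact ih.trans (key _ _ hedge)
    exact huv (conneq u v (hconn u v))
end

/-- Dirichlet's principle: in a finite connected network with distinct vertices
`a, z`, the effective resistance `(h₀ z - h₀ a)/‖c d h₀‖` (computed from any
nonconstant voltage `h₀`) equals the supremum of `1/E(h)` over all `h : V → ℝ`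
with `h a = 0` and `h z = 1`. -/
theorem stmt_6 {V : Type*} [Fintype V]
    (c : V → V → ℝ) (hsym : ∀ x y, c x y = c y x) (hnn : ∀ x y, 0 ≤ c x y)
    (hconn : ∀ x y : V, Relation.ReflTransGen (fun u v => 0 < c u v) x y)
    (a z : V) (haz : a ≠ z)
    (h₀ : V → ℝ)
    (hharm : ∀ x, x ≠ a → x ≠ z → ∑ y, c x y * (h₀ y - h₀ x) = 0)
    (hnc : ∃ u v, h₀ u ≠ h₀ v) :
    (h₀ z - h₀ a) / (∑ y, c a y * (h₀ y - h₀ a)) =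
      sSup {q : ℝ | ∃ h : V → ℝ, h a = 0 ∧ h z = 1 ∧
        q = 1 / ((1/2) * ∑ x, ∑ y, c x y * (h y - h x) ^ 2)} := by
  classical
  set D : V → ℝ := fun x => ∑ y, c x y * (h₀ y - h₀ x) with hD
  -- weighted divergence supported on {a, z}
  have hsupp : ∀ g : V → ℝ, ∑ x, g x * D x = g a * D a + g z * D z := by
    intro g
    have h1 : ∑ x ∈ ({a, z} : Finset V), g x * D x = ∑ x, g x * D x := by
      apply Finset.sum_subset (Finset.subset_univ _)
      intro x _ hx
      simp only [Finset.mem_insert, Finset.mem_singleton, not_or] at hx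
      rw [show D x = 0 from hharm x hx.1 hx.2, mul_zero]
    rw [← h1, Finset.sum_pair haz]
  have hDz : D z = - D a := by
    have h0' : ∑ x, D x = 0 := by
      have h0 := myparts c hsym h₀ (fun _ => 1)
      simp only [sub_self, mul_zero, Finset.sum_const_zero, one_mul] at h0
      have hrfl : ∑ x, D x = ∑ x, ∑ y, c x y * (h₀ y - h₀ x) := rfl
      rw [hrfl]; linarith
    have h2 := hsupp (fun _ => 1)
    simp only [one_mul] at h2
    rw [h2] at h0'
    linarith
  set S : ℝ := D a with hSdef
  set d : ℝ := h₀ z - h₀ a with hddef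
  -- energy of h₀
  have hE0 : ∑ x, ∑ y, c x y * (h₀ y - h₀ x) ^ 2 = 2 * (S * d) := by
    have h1 := myparts c hsym h₀ h₀
    have h2 : ∑ x, ∑ y, c x y * (h₀ y - h₀ x) ^ 2
        = ∑ x, ∑ y, c x y * ((h₀ y - h₀ x) * (h₀ y - h₀ x)) := by
      exact Finset.sum_congr rfl fun x _ => Finset.sum_congr rfl fun y _ => by ring
    rw [h2, h1, hsupp h₀, hDz]
    simp only [hSdef, hddef]
    ring
  obtain ⟨u, v, huv⟩ := hnc
  have hE0pos : 0 < ∑ x, ∑ y, c x y * (h₀ y - h₀ x) ^ 2 := mypos c hnn hconn h₀ huv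
  have hSd : 0 < S * d := by linarith [hE0 ▸ hE0pos]
  have hd : d ≠ 0 := fun h => by rw [h, mul_zero] at hSd; exact lt_irrefl 0 hSd
  have hS : S ≠ 0 := fun h => by rw [h, zero_mul] at hSd; exact lt_irrefl 0 hSd
  have hSdpos : 0 < S / d := by
    rcases mul_pos_iff.mp hSd with ⟨h1, h2⟩ | ⟨h1, h2⟩
    · exact div_pos h1 h2
    · exact div_pos_of_neg_of_neg h1 h2
  have hdSpos : 0 < d / S := by
    rcases mul_pos_iff.mp hSd with ⟨h1, h2⟩ | ⟨h1, h2⟩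
    · exact div_pos h2 h1
    · exact div_pos_of_neg_of_neg h2 h1
  set hstar : V → ℝ := fun x => (h₀ x - h₀ a) / d with hstardef
  have hstara : hstar a = 0 := by simp [hstardef]
  have hstarz : hstar z = 1 := by
    simp only [hstardef, ← hddef]
    exact div_self hd
  have hstardiff : ∀ x y : V, hstar y - hstar x = (h₀ y - h₀ x) / d := by
    intro x y; simp only [hstardef]; ring
  have hEstar : ∑ x, ∑ y, c x y * (hstar y - hstar x) ^ 2 = 2 * (S / d) := by
    have h1 : ∀ x y : V, c x y * (hstar y - hstar x) ^ 2
        = c x y * (h₀ y - h₀ x) ^ 2 / d ^ 2 := by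
      intro x y; rw [hstardiff]; field_simp
    calc ∑ x, ∑ y, c x y * (hstar y - hstar x) ^ 2
        = (∑ x, ∑ y, c x y * (h₀ y - h₀ x) ^ 2) / d ^ 2 := by
          rw [Finset.sum_div]
          exact Finset.sum_congr rfl fun x _ => by
            rw [Finset.sum_div]
            exact Finset.sum_congr rfl fun y _ => h1 x y
      _ = 2 * (S / d) := by rw [hE0]; field_simp
  have hEstarpos : 0 < ∑ x, ∑ y, c x y * (hstar y - hstar x) ^ 2 := by
    rw [hEstar]; linarith
  have hDstar : ∀ x : V, ∑ y, c x y * (hstar y - hstar x) = D x / d := by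
    intro x
    rw [hD, Finset.sum_div]
    exact Finset.sum_congr rfl fun y _ => by rw [hstardiff]; ring
  -- the value d / S
  have hval : d / S = 1 / ((1/2) * ∑ x, ∑ y, c x y * (hstar y - hstar x) ^ 2) := by
    rw [hEstar]
    rw [show (1/2 : ℝ) * (2 * (S / d)) = S / d by ring, one_div_div]
  -- upper bound
  have hub : ∀ q ∈ {q : ℝ | ∃ h : V → ℝ, h a = 0 ∧ h z = 1 ∧
      q = 1 / ((1/2) * ∑ x, ∑ y, c x y * (h y - h x) ^ 2)}, q ≤ d / S := by
    rintro q ⟨h, ha0, hz1, rfl⟩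
    set g : V → ℝ := fun x => h x - hstar x with hgdef
    have hga : g a = 0 := by simp [hgdef, ha0, hstara]
    have hgz : g z = 0 := by simp [hgdef, hz1, hstarz]
    have hcross : ∑ x, ∑ y, c x y * ((hstar y - hstar x) * (g y - g x)) = 0 := by
      rw [myparts c hsym hstar g]
      have h1 : ∑ x, g x * ∑ y, c x y * (hstar y - hstar x)
          = ∑ x, (g x / d) * D x := by
        exact Finset.sum_congr rfl fun x _ => by rw [hDstar]; ring
      rw [h1, hsupp (fun x => g x / d), hga, hgz]
      simp
    have hexp : ∑ x, ∑ y, c x y * (h y - h x) ^ 2 =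
        ∑ x, ∑ y, c x y * (hstar y - hstar x) ^ 2
        + ∑ x, ∑ y, c x y * (g y - g x) ^ 2 := by
      have hh : h = fun x => hstar x + g x := funext fun x => by simp [hgdef]
      calc ∑ x, ∑ y, c x y * (h y - h x) ^ 2
          = ∑ x, ∑ y, c x y * ((hstar y + g y) - (hstar x + g x)) ^ 2 := by
            exact Finset.sum_congr rfl fun x _ => Finset.sum_congr rfl fun y _ => by
              simp only [hgdef]; ring_nf
        _ = _ := by rw [myexpand c hstar g, hcross]; ring
    have hgnn : 0 ≤ ∑ x, ∑ y, c x y * (g y - g x) ^ 2 :=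
      Finset.sum_nonneg fun x _ => Finset.sum_nonneg fun y _ =>
        mul_nonneg (hnn x y) (sq_nonneg _)
    have hle : ∑ x, ∑ y, c x y * (hstar y - hstar x) ^ 2
        ≤ ∑ x, ∑ y, c x y * (h y - h x) ^ 2 := by rw [hexp]; linarith
    rw [hval]
    apply one_div_le_one_div_of_le
    · linarith
    · linarith
  refine le_antisymm ?_ (csSup_le ⟨d / S, hstar, hstara, hstarz, hval⟩ hub)
  exact le_csSup ⟨d / S, hub⟩ ⟨hstar, hstara, hstarz, hval⟩
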